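/- Fix points x_1,…,x_M ∈ ℝ^d, weights μ ∈ ℝ^M with positive entries and Σ_i μ_i = 1, and ν ∈ ℝ^M with nonnegative entries and Σ_j ν_j = 1. Let c : ℝ^d × ℝ^d → ℝ be strictly convex in its second argument. Then: (i) the vector of barycentric means of optimal plans for V(μ, ν) is unique, i.e., any two minimizers π, π' of π ↦ Σ_i μ_i·c(x_i, (1/μ_i)·Σ_j π_{ij}x_j) over Π(μ,ν) satisfy (1/μ_i)·Σ_j π_{ij}x_j = (1/μ_i)·Σ_j π'_{ij}x_j =: m̂_i for all i; (ii) under the assumptions that U ⊆ ℝ^d is open containing the convex hull of {x_1,…,x_M}, Y_n ⊂ ℝ^d are finite sets with U contained in the convex hull of Y_n for all n and sup_{a∈U} min_{y∈Y_n} ‖a − y‖ → 0, and (π̂^{x,n}, π̂^{y,n}) are optimal solutions of the relaxed problem with respect to Y_n with means m̂_i^n := (1/μ_i)·Σ_j π̂^{x,n}_{ij}x_j, it holds that lim_{n→∞} m̂_i^n = m̂_i for every i = 1,…,M. -/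

import Mathlib

open Filter Topology

/-- The set of couplings of `μ` and `ν`. -/
def PiSet {M : ℕ} (μ ν : Fin M → ℝ) : Set (Fin M → Fin M → ℝ) :=
  {π | (∀ i j, 0 ≤ π i j) ∧ (∀ i, ∑ j, π i j = μ i) ∧ (∀ j, ∑ i, π i j = ν j)}

/-- The barycentric weak OT objective. -/
noncomputable def weakCost {d M : ℕ} (x : Fin M → EuclideanSpace ℝ (Fin d))
    (μ : Fin M → ℝ)
    (c : EuclideanSpace ℝ (Fin d) → EuclideanSpace ℝ (Fin d) → ℝ)
    (π : Fin M → Fin M → ℝ) : ℝ :=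
  ∑ i, μ i * c (x i) ((μ i)⁻¹ • ∑ j, π i j • x j)

/-- Scaled Jensen inequality for a convex function. -/
lemma jensen_scaled {d N : ℕ} {g : EuclideanSpace ℝ (Fin d) → ℝ}
    (hg : ConvexOn ℝ Set.univ g) (w : Fin N → ℝ) (hw : ∀ k, 0 ≤ w k)
    {s : ℝ} (hws : ∑ k, w k = s) (hs : 0 < s) (p : Fin N → EuclideanSpace ℝ (Fin d)) :
    s * g (s⁻¹ • ∑ k, w k • p k) ≤ ∑ k, w k * g (p k) := by
  have hsne : s ≠ 0 := hs.ne'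
  have h1 : ∑ k, w k / s = 1 := by
    rw [← Finset.sum_div, hws, div_self hsne]
  have h2 : ∑ k, (w k / s) • p k = s⁻¹ • ∑ k, w k • p k := by
    rw [Finset.smul_sum]
    refine Finset.sum_congr rfl fun k _ => ?_
    rw [div_eq_inv_mul, mul_smul]
  have := hg.map_sum_le (t := Finset.univ) (w := fun k => w k / s) (p := p)
    (fun k _ => div_nonneg (hw k) hs.le) h1 (fun k _ => Set.mem_univ _)
  rw [h2] at this
  calc s * g (s⁻¹ • ∑ k, w k • p k) ≤ s * ∑ k, (w k / s) * g (p k) :=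
        mul_le_mul_of_nonneg_left this hs.le
    _ = ∑ k, w k * g (p k) := by
        rw [Finset.mul_sum]
        refine Finset.sum_congr rfl fun k _ => ?_
        field_simp

/-- Normalized barycenters lie in the convex hull. -/
lemma mean_mem_convexHull {d M : ℕ} (x : Fin M → EuclideanSpace ℝ (Fin d))
    (w : Fin M → ℝ) (hw : ∀ j, 0 ≤ w j) {s : ℝ} (hws : ∑ j, w j = s) (hs : 0 < s) :
    s⁻¹ • ∑ j, w j • x j ∈ convexHull ℝ (Set.range x) := by
  have := Finset.centerMass_mem_convexHull (t := Finset.univ) (w := w) (z := x)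
    (hw₀ := fun j _ => hw j) (hws := by rw [hws]; exact hs)
    (hz := fun j _ => Set.mem_range_self j) (s := Set.range x)
  rwa [Finset.centerMass, hws] at this

lemma piSet_isCompact {M : ℕ} (μ ν : Fin M → ℝ) (hμ : ∀ i, 0 < μ i)
    (hμs : ∑ i, μ i = 1) : IsCompact (PiSet μ ν) := by
  have hsub : PiSet μ ν ⊆ Set.Icc 0 1 := by
    rintro π ⟨h0, h1, _⟩
    constructor
    · intro i; intro j; exact h0 i j
    · intro i; intro j
      have hle1 : π i j ≤ μ i := by
        rw [← h1 i]
        exact Finset.single_le_sum (fun j _ => h0 i j) (Finset.mem_univ j)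
      have hμle : μ i ≤ 1 := by
        rw [← hμs]
        exact Finset.single_le_sum (fun i _ => (hμ i).le) (Finset.mem_univ i)
      exact hle1.trans hμle
  refine IsCompact.of_isClosed_subset isCompact_Icc ?_ hsub
  have capp : ∀ i j, Continuous fun π : Fin M → Fin M → ℝ => π i j :=
    fun i j => (continuous_apply j).comp (continuous_apply i)
  have heq : PiSet μ ν =
      (⋂ i, ⋂ j, {π : Fin M → Fin M → ℝ | 0 ≤ π i j}) ∩
      ((⋂ i, {π : Fin M → Fin M → ℝ | ∑ j, π i j = μ i}) ∩
       (⋂ j, {π : Fin M → Fin M → ℝ | ∑ i, π i j = ν j})) := by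
    ext π
    simp only [PiSet, Set.mem_setOf_eq, Set.mem_inter_iff, Set.mem_iInter]
  rw [heq]
  refine IsClosed.inter ?_ (IsClosed.inter ?_ ?_)
  · exact isClosed_iInter fun i => isClosed_iInter fun j =>
      isClosed_le continuous_const (capp i j)
  · exact isClosed_iInter fun i =>
      isClosed_eq (continuous_finset_sum _ fun j _ => capp i j) continuous_const
  · exact isClosed_iInter fun j =>
      isClosed_eq (continuous_finset_sum _ fun i _ => capp i j) continuous_const

/-- If a grid is `ε`-dense in an open neighborhood of `m`, then `m` is a convex
combination of grid points at distance at most `3ε` from `m`. -/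
lemma surround {d N : ℕ} (y : Fin N → EuclideanSpace ℝ (Fin d))
    {U : Set (EuclideanSpace ℝ (Fin d))} {m : EuclideanSpace ℝ (Fin d)}
    {r ε : ℝ} (hε : 0 < ε)
    (hrU : Metric.ball m r ⊆ U) (hεr : 4 * ε ≤ r)
    (hd : ∀ a ∈ U, ∃ k, ‖a - y k‖ ≤ ε) :
    ∃ lam : Fin N → ℝ, (∀ k, 0 ≤ lam k) ∧ ∑ k, lam k = 1 ∧
      ∑ k, lam k • y k = m ∧ ∀ k, lam k ≠ 0 → ‖y k - m‖ ≤ 3 * ε := by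
  classical
  set T : Finset (Fin N) := Finset.univ.filter (fun k => ‖y k - m‖ ≤ 3 * ε) with hT
  set t : Finset (EuclideanSpace ℝ (Fin d)) := T.image y with ht
  -- Step 1: m lies in the convex hull of the nearby grid points.
  have hmm : m ∈ convexHull ℝ (t : Set (EuclideanSpace ℝ (Fin d))) := by
    by_contra hmem
    have hclosed : IsClosed (convexHull ℝ (t : Set (EuclideanSpace ℝ (Fin d)))) :=
      (t.finite_toSet.isCompact_convexHull (𝕜 := ℝ)).isClosed
    obtain ⟨f, u, hfu, hum⟩ :=
      geometric_hahn_banach_closed_point (convex_convexHull ℝ _) hclosed hmem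
    set z : EuclideanSpace ℝ (Fin d) := (InnerProductSpace.toDual ℝ _).symm f with hz
    have hfz : ∀ v, f v = (inner ℝ z v : ℝ) := fun v =>
      (InnerProductSpace.toDual_symm_apply).symm
    have hzz : ‖(2 * ε) • ‖z‖⁻¹ • z‖ ≤ 2 * ε := by
      rw [norm_smul, norm_smul]
      have h1 : ‖‖z‖⁻¹‖ * ‖z‖ ≤ 1 := by
        rcases eq_or_ne z 0 with h | h
        · simp [h]
        · rw [Real.norm_eq_abs, abs_of_nonneg (by positivity),
            inv_mul_cancel₀ (norm_ne_zero_iff.mpr h)]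
      have h2 : ‖(2:ℝ) * ε‖ = 2 * ε := by
        rw [Real.norm_eq_abs, abs_of_nonneg (by positivity)]
      rw [h2]
      nlinarith [norm_nonneg z, norm_nonneg (‖z‖⁻¹ : ℝ)]
    set a : EuclideanSpace ℝ (Fin d) := m + (2 * ε) • ‖z‖⁻¹ • z with ha
    have haU : a ∈ U := by
      apply hrU
      rw [Metric.mem_ball, dist_eq_norm, ha]
      have h1 : ‖m + (2 * ε) • ‖z‖⁻¹ • z - m‖ = ‖(2 * ε) • ‖z‖⁻¹ • z‖ := by
        congr 1; abel
      rw [h1]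
      linarith
    obtain ⟨k, hk⟩ := hd a haU
    have hky : ‖y k - m‖ ≤ 3 * ε := by
      have : ‖y k - m‖ ≤ ‖y k - a‖ + ‖a - m‖ := norm_sub_le_norm_sub_add_norm_sub _ _ _
      have h1 : ‖y k - a‖ ≤ ε := by rwa [norm_sub_rev] at hk
      have h2 : ‖a - m‖ ≤ 2 * ε := by
        rw [ha]
        have h1' : m + (2 * ε) • ‖z‖⁻¹ • z - m = (2 * ε) • ‖z‖⁻¹ • z := by abel
        rw [h1']
        exact hzz
      linarith
    have hkt : y k ∈ t := by
      rw [ht, Finset.mem_image]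
      exact ⟨k, by simp [hT, hky], rfl⟩
    have hflt : f (y k) < f m := (hfu _ (by exact_mod_cast subset_convexHull ℝ _ hkt)).trans hum
    rcases eq_or_ne z 0 with h0 | h0
    · have : f = 0 := by
        have : (InnerProductSpace.toDual ℝ (EuclideanSpace ℝ (Fin d))) z = f := by
          rw [hz]; simp
        rw [← this, h0]; simp
      rw [this] at hflt; simp at hflt
    · have hnz : 0 < ‖z‖ := norm_pos_iff.mpr h0
      have hfa : f a = f m + 2 * ε * ‖z‖ := by
        rw [ha, map_add, map_smul, map_smul, hfz z, real_inner_self_eq_norm_sq]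
        field_simp
        simp only [smul_eq_mul]
        have hz2 : ‖z‖⁻¹ * (‖z‖ * ‖z‖) = ‖z‖ := by
          rw [← mul_assoc, inv_mul_cancel₀ hnz.ne', one_mul]
        simp only [one_div, pow_two, hz2]
      have hlow : f m + ε * ‖z‖ ≤ f (y k) := by
        have h1 : |f (y k) - f a| ≤ ‖z‖ * ε := by
          rw [← map_sub, hfz]
          calc |(inner ℝ z (y k - a) : ℝ)| ≤ ‖z‖ * ‖y k - a‖ := abs_real_inner_le_norm z _
            _ ≤ ‖z‖ * ε := by
                apply mul_le_mul_of_nonneg_left _ hnz.le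
                rwa [norm_sub_rev] at hk
        have h2 : f a - ‖z‖ * ε ≤ f (y k) := by
          have := (abs_le.mp h1).1; linarith
        rw [hfa] at h2; linarith
      nlinarith
  -- Step 2: extract weights indexed by `Fin N`.
  rcases t.eq_empty_or_nonempty with hte | htne
  · rw [hte] at hmm; simp at hmm
  obtain ⟨p₀, hp₀⟩ := htne
  obtain ⟨k₀, _, _⟩ := Finset.mem_image.mp (ht ▸ hp₀)
  have : Nonempty (Fin N) := ⟨k₀⟩
  obtain ⟨w, hw0, hw1, hwm⟩ := Finset.mem_convexHull'.mp hmm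
  set g : EuclideanSpace ℝ (Fin d) → Fin N :=
    fun p => if h : ∃ k, k ∈ T ∧ y k = p then h.choose else Classical.arbitrary _ with hg
  have hgspec : ∀ p ∈ t, g p ∈ T ∧ y (g p) = p := by
    intro p hp
    obtain ⟨k, hkT, hkp⟩ := Finset.mem_image.mp (ht ▸ hp)
    have hex : ∃ k, k ∈ T ∧ y k = p := ⟨k, hkT, hkp⟩
    rw [hg]; simp only [dif_pos hex]
    exact hex.choose_spec
  refine ⟨fun k => ∑ p ∈ t.filter (fun p => g p = k), w p, ?_, ?_, ?_, ?_⟩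
  · intro k
    exact Finset.sum_nonneg fun p hp => hw0 p (Finset.mem_filter.mp hp).1
  · rw [Finset.sum_fiberwise_of_maps_to (fun p _ => Finset.mem_univ (g p)) w, hw1]
  · calc ∑ k, (∑ p ∈ t.filter (fun p => g p = k), w p) • y k
        = ∑ k : Fin N, ∑ p ∈ t.filter (fun p => g p = k), w p • p := by
          refine Finset.sum_congr rfl fun k _ => ?_
          rw [Finset.sum_smul]
          refine Finset.sum_congr rfl fun p hp => ?_
          obtain ⟨hpt, hgp⟩ := Finset.mem_filter.mp hp
          rw [← hgp, (hgspec p hpt).2]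
      _ = ∑ p ∈ t, w p • p :=
          Finset.sum_fiberwise_of_maps_to (fun p _ => Finset.mem_univ (g p)) _
      _ = m := hwm
  · intro k hk
    obtain ⟨p, hp, -⟩ := Finset.exists_ne_zero_of_sum_ne_zero hk
    obtain ⟨hpt, hgp⟩ := Finset.mem_filter.mp hp
    have := (hgspec p hpt).1
    rw [hgp] at this
    simpa [hT] using this

/-- For strictly convex costs: (i) the barycentric means of optimal weak OT
plans are unique; (ii) the means of the optimal relaxed plans converge to
these optimal means as the grids `Yₙ` become dense. -/
theorem stmt14 {d M : ℕ}
    (x : Fin M → EuclideanSpace ℝ (Fin d))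
    (μ ν : Fin M → ℝ) (hμ : ∀ i, 0 < μ i) (hμs : ∑ i, μ i = 1)
    (hν : ∀ j, 0 ≤ ν j) (hνs : ∑ j, ν j = 1)
    (c : EuclideanSpace ℝ (Fin d) → EuclideanSpace ℝ (Fin d) → ℝ)
    (hc : ∀ a, StrictConvexOn ℝ Set.univ (c a))
    (U : Set (EuclideanSpace ℝ (Fin d))) (hUopen : IsOpen U)
    (hXU : convexHull ℝ (Set.range x) ⊆ U)
    (N : ℕ → ℕ) (y : (n : ℕ) → Fin (N n) → EuclideanSpace ℝ (Fin d))
    (hUY : ∀ n, U ⊆ convexHull ℝ (Set.range (y n)))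
    (hdist : ∀ ε > (0 : ℝ), ∃ n₀ : ℕ, ∀ n ≥ n₀, ∀ a ∈ U, ∃ k, ‖a - y n k‖ ≤ ε)
    (πx : (n : ℕ) → Fin M → Fin M → ℝ)
    (πy : (n : ℕ) → Fin M → Fin (N n) → ℝ)
    (hfeas : ∀ n, πx n ∈ PiSet μ ν ∧ (∀ i k, 0 ≤ πy n i k) ∧
      (∀ i, ∑ k, πy n i k = μ i) ∧
      (∀ i, ∑ j, πx n i j • x j = ∑ k, πy n i k • y n k))
    (hopt : ∀ n, ∀ (σx : Fin M → Fin M → ℝ) (σy : Fin M → Fin (N n) → ℝ),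
      σx ∈ PiSet μ ν → (∀ i k, 0 ≤ σy i k) → (∀ i, ∑ k, σy i k = μ i) →
      (∀ i, ∑ j, σx i j • x j = ∑ k, σy i k • y n k) →
      ∑ i, ∑ k, πy n i k * c (x i) (y n k) ≤
        ∑ i, ∑ k, σy i k * c (x i) (y n k)) :
    -- (i) uniqueness of the optimal barycentric means:
    (∀ π π', π ∈ PiSet μ ν → (∀ σ ∈ PiSet μ ν, weakCost x μ c π ≤ weakCost x μ c σ) →
      π' ∈ PiSet μ ν → (∀ σ ∈ PiSet μ ν, weakCost x μ c π' ≤ weakCost x μ c σ) →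
      ∀ i, (μ i)⁻¹ • ∑ j, π i j • x j = (μ i)⁻¹ • ∑ j, π' i j • x j) ∧
    -- (ii) convergence of the relaxed means to the optimal means:
    (∀ π, π ∈ PiSet μ ν → (∀ σ ∈ PiSet μ ν, weakCost x μ c π ≤ weakCost x μ c σ) →
      ∀ i, Tendsto (fun n => (μ i)⁻¹ • ∑ j, πx n i j • x j) atTop
        (𝓝 ((μ i)⁻¹ • ∑ j, π i j • x j))) := by
  classical
  have hwc : ∀ τ : Fin M → Fin M → ℝ, weakCost x μ c τ
      = ∑ i, μ i * c (x i) ((μ i)⁻¹ • ∑ j, τ i j • x j) := fun τ => rfl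
  -- Continuity of the cost in its second argument (convex + finite dimension).
  have ccont : ∀ i : Fin M, Continuous (c (x i)) := by
    intro i
    exact continuousOn_univ.mp
      (((hc (x i)).convexOn).continuousOn isOpen_univ)
  -- Part (i): uniqueness of the optimal means.
  have huniq : ∀ π π', π ∈ PiSet μ ν →
      (∀ σ ∈ PiSet μ ν, weakCost x μ c π ≤ weakCost x μ c σ) →
      π' ∈ PiSet μ ν → (∀ σ ∈ PiSet μ ν, weakCost x μ c π' ≤ weakCost x μ c σ) →
      ∀ i, (μ i)⁻¹ • ∑ j, π i j • x j = (μ i)⁻¹ • ∑ j, π' i j • x j := by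
    intro π π' hπ hπo hπ' hπ'o
    by_contra hne
    push_neg at hne
    obtain ⟨i₀, hi₀⟩ := hne
    set σ : Fin M → Fin M → ℝ := fun i j => (π i j + π' i j) / 2 with hσdef
    have hσmem : σ ∈ PiSet μ ν := by
      refine ⟨fun i j => ?_, fun i => ?_, fun j => ?_⟩
      · have h1 := hπ.1 i j; have h2 := hπ'.1 i j
        simp only [hσdef]; positivity
      · simp only [hσdef]
        rw [← Finset.sum_div, Finset.sum_add_distrib, hπ.2.1 i, hπ'.2.1 i]
        ring
      · simp only [hσdef]
        rw [← Finset.sum_div, Finset.sum_add_distrib, hπ.2.2 j, hπ'.2.2 j]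
        ring
    set A : Fin M → EuclideanSpace ℝ (Fin d) :=
      fun i => (μ i)⁻¹ • ∑ j, π i j • x j with hA
    set B : Fin M → EuclideanSpace ℝ (Fin d) :=
      fun i => (μ i)⁻¹ • ∑ j, π' i j • x j with hB
    have hmean : ∀ i, (μ i)⁻¹ • ∑ j, σ i j • x j
        = (2⁻¹ : ℝ) • A i + (2⁻¹ : ℝ) • B i := by
      intro i
      have h1 : ∑ j, σ i j • x j
          = (2⁻¹ : ℝ) • ((∑ j, π i j • x j) + ∑ j, π' i j • x j) := by
        rw [smul_add, Finset.smul_sum, Finset.smul_sum, ← Finset.sum_add_distrib]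
        refine Finset.sum_congr rfl fun j _ => ?_
        simp only [hσdef]
        rw [div_eq_inv_mul, mul_smul, add_smul, smul_add]
      rw [h1, smul_comm, smul_add, hA, hB]
      simp only [smul_add]
    have hval : weakCost x μ c π' = weakCost x μ c π :=
      le_antisymm (hπ'o π hπ) (hπo π' hπ')
    have hle : ∀ i, μ i * c (x i) ((μ i)⁻¹ • ∑ j, σ i j • x j)
        ≤ μ i * (2⁻¹ * c (x i) (A i) + 2⁻¹ * c (x i) (B i)) := by
      intro i
      rw [hmean i]
      have h2 := ((hc (x i)).convexOn).2 (Set.mem_univ (A i)) (Set.mem_univ (B i))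
        (by norm_num : (0:ℝ) ≤ 2⁻¹) (by norm_num : (0:ℝ) ≤ 2⁻¹) (by norm_num)
      exact mul_le_mul_of_nonneg_left h2 (hμ i).le
    have hstrict : μ i₀ * c (x i₀) ((μ i₀)⁻¹ • ∑ j, σ i₀ j • x j)
        < μ i₀ * (2⁻¹ * c (x i₀) (A i₀) + 2⁻¹ * c (x i₀) (B i₀)) := by
      rw [hmean i₀]
      have h2 := (hc (x i₀)).2 (Set.mem_univ (A i₀)) (Set.mem_univ (B i₀)) hi₀
        (by norm_num : (0:ℝ) < 2⁻¹) (by norm_num : (0:ℝ) < 2⁻¹) (by norm_num)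
      exact mul_lt_mul_of_pos_left h2 (hμ i₀)
    have hsum : weakCost x μ c σ
        < ∑ i, μ i * (2⁻¹ * c (x i) (A i) + 2⁻¹ * c (x i) (B i)) := by
      rw [hwc σ]
      exact Finset.sum_lt_sum (fun i _ => hle i) ⟨i₀, Finset.mem_univ _, hstrict⟩
    have heq : ∑ i, μ i * (2⁻¹ * c (x i) (A i) + 2⁻¹ * c (x i) (B i))
        = 2⁻¹ * weakCost x μ c π + 2⁻¹ * weakCost x μ c π' := by
      rw [hwc π, hwc π', Finset.mul_sum, Finset.mul_sum, ← Finset.sum_add_distrib]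
      exact Finset.sum_congr rfl fun i _ => by rw [hA, hB]; ring
    have hcontra := hπo σ hσmem
    rw [heq, hval] at hsum
    linarith
  refine ⟨huniq, ?_⟩
  -- Part (ii): convergence of the relaxed means.
  intro π hπ hπopt i
  -- lower bound via Jensen
  have hjen : ∀ n, weakCost x μ c (πx n) ≤ ∑ i, ∑ k, πy n i k * c (x i) (y n k) := by
    intro n
    rw [hwc]
    refine Finset.sum_le_sum fun i' _ => ?_
    rw [(hfeas n).2.2.2 i']
    exact jensen_scaled (hc (x i')).convexOn (πy n i') (fun k => (hfeas n).2.1 i' k)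
      ((hfeas n).2.2.1 i') (hμ i') (y n)
  -- upper bound via the surrounding construction
  have hB : ∀ η > (0:ℝ), ∃ n₀, ∀ n ≥ n₀,
      ∑ i, ∑ k, πy n i k * c (x i) (y n k) ≤ weakCost x μ c π + η := by
    intro η hη
    have hmU : ∀ i', (μ i')⁻¹ • (∑ j, π i' j • x j) ∈ U := fun i' =>
      hXU (mean_mem_convexHull x (π i') (fun j => hπ.1 i' j) (hπ.2.1 i') (hμ i'))
    have hδex : ∀ i' : Fin M, ∃ δ > (0:ℝ), ∀ b, ‖b - (μ i')⁻¹ • (∑ j, π i' j • x j)‖ ≤ δ →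
        c (x i') b ≤ c (x i') ((μ i')⁻¹ • (∑ j, π i' j • x j)) + η := by
      intro i'
      have hca : ContinuousAt (c (x i')) ((μ i')⁻¹ • (∑ j, π i' j • x j)) :=
        (ccont i').continuousAt
      rw [Metric.continuousAt_iff] at hca
      obtain ⟨δ', hδ'0, hδ'⟩ := hca η hη
      refine ⟨δ' / 2, by positivity, fun b hb => ?_⟩
      have h2 := hδ' (show dist b _ < δ' by rw [dist_eq_norm]; linarith)
      rw [Real.dist_eq] at h2
      linarith [(abs_lt.mp h2).2]
    choose δ hδ0 hδ using hδex
    have hrex : ∀ i' : Fin M, ∃ r > (0:ℝ),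
        Metric.ball ((μ i')⁻¹ • (∑ j, π i' j • x j)) r ⊆ U :=
      fun i' => Metric.isOpen_iff.mp hUopen _ (hmU i')
    choose r hr0 hrb using hrex
    have hM : 0 < M := by
      rcases Nat.eq_zero_or_pos M with h | h
      · exfalso; subst h; simpa using hμs
      · exact h
    have hne : (Finset.univ : Finset (Fin M)).Nonempty := ⟨⟨0, hM⟩, Finset.mem_univ _⟩
    set ε := Finset.univ.inf' hne (fun i' => min (δ i' / 3) (r i' / 4)) with hεdef
    have hεpos : 0 < ε := by
      rw [hεdef, Finset.lt_inf'_iff]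
      refine fun i' _ => lt_min ?_ ?_
      · have := hδ0 i'; linarith
      · have := hr0 i'; linarith
    have hε3 : ∀ i', 3 * ε ≤ δ i' := by
      intro i'
      have h := Finset.inf'_le (f := fun i' => min (δ i' / 3) (r i' / 4))
        (Finset.mem_univ i')
      have h2 := min_le_left (δ i' / 3) (r i' / 4)
      rw [hεdef]; linarith
    have hε4 : ∀ i', 4 * ε ≤ r i' := by
      intro i'
      have h := Finset.inf'_le (f := fun i' => min (δ i' / 3) (r i' / 4))
        (Finset.mem_univ i')
      have h2 := min_le_right (δ i' / 3) (r i' / 4)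
      rw [hεdef]; linarith
    obtain ⟨n₀, hn₀⟩ := hdist ε hεpos
    refine ⟨n₀, fun n hn => ?_⟩
    have hsurr : ∀ i' : Fin M, ∃ lam : Fin (N n) → ℝ, (∀ k, 0 ≤ lam k) ∧
        (∑ k, lam k = 1) ∧
        (∑ k, lam k • y n k = (μ i')⁻¹ • (∑ j, π i' j • x j)) ∧
        ∀ k, lam k ≠ 0 → ‖y n k - (μ i')⁻¹ • (∑ j, π i' j • x j)‖ ≤ 3 * ε :=
      fun i' => surround (y n) hεpos (hrb i') (hε4 i') (hn₀ n hn)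
    choose lam hlam0 hlam1 hlamy hlam3 using hsurr
    have hstep := hopt n π (fun i' k => μ i' * lam i' k) hπ
      (fun i' k => mul_nonneg (hμ i').le (hlam0 i' k))
      (fun i' => by rw [← Finset.mul_sum, hlam1 i', mul_one])
      (fun i' => by
        have h1 : ∑ k, (μ i' * lam i' k) • y n k = μ i' • ∑ k, lam i' k • y n k := by
          rw [Finset.smul_sum]
          exact Finset.sum_congr rfl fun k _ => mul_smul _ _ _
        rw [h1, hlamy i', smul_inv_smul₀ (hμ i').ne'])
    refine le_trans hstep ?_
    calc ∑ i', ∑ k, (μ i' * lam i' k) * c (x i') (y n k)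
        ≤ ∑ i', μ i' * (c (x i') ((μ i')⁻¹ • (∑ j, π i' j • x j)) + η) := by
          refine Finset.sum_le_sum fun i' _ => ?_
          have h1 : ∑ k, (μ i' * lam i' k) * c (x i') (y n k)
              = μ i' * ∑ k, lam i' k * c (x i') (y n k) := by
            rw [Finset.mul_sum]
            exact Finset.sum_congr rfl fun k _ => by ring
          rw [h1]
          refine mul_le_mul_of_nonneg_left ?_ (hμ i').le
          calc ∑ k, lam i' k * c (x i') (y n k)
              ≤ ∑ k, lam i' k * (c (x i') ((μ i')⁻¹ • (∑ j, π i' j • x j)) + η) := by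
                refine Finset.sum_le_sum fun k _ => ?_
                rcases eq_or_ne (lam i' k) 0 with h | h
                · simp [h]
                · exact mul_le_mul_of_nonneg_left
                    (hδ i' _ (le_trans (hlam3 i' k h) (hε3 i'))) (hlam0 i' k)
            _ = c (x i') ((μ i')⁻¹ • (∑ j, π i' j • x j)) + η := by
                rw [← Finset.sum_mul, hlam1 i', one_mul]
      _ = weakCost x μ c π + η := by
          rw [hwc]
          simp only [mul_add]
          rw [Finset.sum_add_distrib, ← Finset.sum_mul, hμs, one_mul]
  -- squeeze: the weak costs of the relaxed plans converge to the optimum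
  have hWlim : Tendsto (fun n => weakCost x μ c (πx n)) atTop
      (𝓝 (weakCost x μ c π)) := by
    rw [Metric.tendsto_atTop]
    intro ε' hε'
    obtain ⟨n₀, hn₀⟩ := hB (ε' / 2) (by positivity)
    refine ⟨n₀, fun n hn => ?_⟩
    have h1 := hπopt (πx n) (hfeas n).1
    have h2 := hjen n
    have h3 := hn₀ n hn
    rw [Real.dist_eq, abs_of_nonneg (by linarith)]
    linarith
  -- continuity of the relevant maps in the plan variable
  have hcmean : ∀ i' : Fin M, Continuous fun τ : Fin M → Fin M → ℝ =>
      (μ i')⁻¹ • ∑ j, τ i' j • x j := by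
    intro i'
    exact (continuous_finset_sum _ fun j _ =>
      (show Continuous fun τ : Fin M → Fin M → ℝ => τ i' j from
        (continuous_apply j : Continuous fun p : Fin M → ℝ => p j).comp
          (continuous_apply i' : Continuous fun τ : Fin M → Fin M → ℝ => τ i')).smul
        (continuous_const : Continuous fun _ : Fin M → Fin M → ℝ => x j)).const_smul (μ i')⁻¹
  have hcwc : Continuous (weakCost x μ c) := by
    have h : Continuous fun τ : Fin M → Fin M → ℝ =>
        ∑ i', μ i' * c (x i') ((μ i')⁻¹ • ∑ j, τ i' j • x j) :=
      continuous_finset_sum _ fun i' _ =>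
        continuous_const.mul ((ccont i').comp (hcmean i'))
    exact h
  -- subsequence argument
  apply tendsto_of_subseq_tendsto
  intro ns hns
  obtain ⟨πs, hπsmem, φ, hφ, hφconv⟩ :=
    (piSet_isCompact μ ν hμ hμs).tendsto_subseq (x := fun k => πx (ns k))
      (fun k => (hfeas (ns k)).1)
  refine ⟨φ, ?_⟩
  have hsel : Tendsto (fun k => ns (φ k)) atTop atTop := hns.comp hφ.tendsto_atTop
  have h1 : Tendsto (fun k => weakCost x μ c (πx (ns (φ k)))) atTop
      (𝓝 (weakCost x μ c πs)) := (hcwc.tendsto πs).comp hφconv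
  have h2 : Tendsto (fun k => weakCost x μ c (πx (ns (φ k)))) atTop
      (𝓝 (weakCost x μ c π)) := hWlim.comp hsel
  have hval : weakCost x μ c πs = weakCost x μ c π := tendsto_nhds_unique h1 h2
  have hπsopt : ∀ σ ∈ PiSet μ ν, weakCost x μ c πs ≤ weakCost x μ c σ :=
    fun σ hσ => hval ▸ hπopt σ hσ
  have hmeq := huniq πs π hπsmem hπsopt hπ hπopt i
  have h3 : Tendsto (fun k => (μ i)⁻¹ • ∑ j, πx (ns (φ k)) i j • x j) atTop
      (𝓝 ((μ i)⁻¹ • ∑ j, πs i j • x j)) := ((hcmean i).tendsto πs).comp hφconv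
  rw [hmeq] at h3
  exact h3
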